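/- Let t be a closed nonnegative symmetric form with dense domain D in a real or complex Hilbert space. Then D = D₊ if and only if t is bounded (equivalently, D = H and there exists M ≥ 0 with |t(g,h)| ≤ M‖g‖‖h‖ for all g,h). -/

import Mathlib

open Filter Topology RCLike
open scoped ComplexConjugate

noncomputable section

/-- A nonnegative symmetric sesquilinear form on a subspace `D` of `H`. -/
structure NonnegForm (𝕜 : Type*) [RCLike 𝕜] {H : Type*} [NormedAddCommGroup H]
    [InnerProductSpace 𝕜 H] (D : Submodule 𝕜 H) where
  toFun : D → D → 𝕜
  add_left : ∀ x y z : D, toFun (x + y) z = toFun x z + toFun y z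
  smul_left : ∀ (c : 𝕜) (x y : D), toFun (c • x) y = c * toFun x y
  conj_symm : ∀ x y : D, toFun x y = (starRingEnd 𝕜) (toFun y x)
  nonneg : ∀ x : D, 0 ≤ RCLike.re (toFun x x)

variable {𝕜 H K : Type*} [RCLike 𝕜] [NormedAddCommGroup H] [InnerProductSpace 𝕜 H]
  [NormedAddCommGroup K] [InnerProductSpace 𝕜 K] [CompleteSpace H] [CompleteSpace K]

/-- A partial operator is positive if `⟪x, T x⟫ ≥ 0` on its domain. -/
def IsPositivePMap (T : H →ₗ.[𝕜] H) : Prop :=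
  ∀ x : T.domain, 0 ≤ RCLike.re (@inner 𝕜 H _ (x : H) (T x))

/-- `C` is the (unbounded) composition `A ∘ B` of the partial operators `A` and `B`,
with natural domain `{x ∈ dom B : B x ∈ dom A}`. -/
def IsPComp (A : K →ₗ.[𝕜] H) (B : H →ₗ.[𝕜] K) (C : H →ₗ.[𝕜] H) : Prop :=
  (∀ x : H, x ∈ C.domain ↔ ∃ hx : x ∈ B.domain, B ⟨x, hx⟩ ∈ A.domain) ∧
  ∀ (x : H) (hxC : x ∈ C.domain) (hx : x ∈ B.domain) (hBx : B ⟨x, hx⟩ ∈ A.domain),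
    C ⟨x, hxC⟩ = A ⟨B ⟨x, hx⟩, hBx⟩

/-- `R` is the positive self-adjoint square root of `T`, i.e. `R` is positive
self-adjoint and `R ∘ R = T` as partial operators. -/
def IsSqrtOf (R T : H →ₗ.[𝕜] H) : Prop :=
  IsSelfAdjoint R ∧ IsPositivePMap R ∧ IsPComp R R T

/-- The set `D₊` of all `g ∈ D` with `|t(g,h)|² ≤ C‖h‖²` for some `C ≥ 0` and all `h ∈ D`. -/
def Dplus {D : Submodule 𝕜 H} (t : NonnegForm 𝕜 D) : Set H :=
  {g | ∃ hg : g ∈ D, ∃ C : ℝ, 0 ≤ C ∧ ∀ h : D, ‖t.toFun ⟨g, hg⟩ h‖ ^ 2 ≤ C * ‖(h : H)‖ ^ 2}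

/-- The set `D₊₊` of all `g ∈ D` approximable by a sequence from `D₊` converging
to `g` in `H` and in the seminorm of the form `t`. -/
def Dpp {D : Submodule 𝕜 H} (t : NonnegForm 𝕜 D) : Set H :=
  {g | ∃ hg : g ∈ D, ∃ u : ℕ → D, (∀ n, (u n : H) ∈ Dplus t) ∧
    Tendsto (fun n => (u n : H)) atTop (𝓝 g) ∧
    Tendsto (fun n => RCLike.re (t.toFun (u n - ⟨g, hg⟩) (u n - ⟨g, hg⟩))) atTop (𝓝 0)}

/-- The form `t` is closed. -/
def FormClosed {D : Submodule 𝕜 H} (t : NonnegForm 𝕜 D) : Prop :=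
  ∀ (u : ℕ → D) (g : H), Tendsto (fun n => (u n : H)) atTop (𝓝 g) →
    (∀ ε > (0 : ℝ), ∃ N, ∀ n ≥ N, ∀ m ≥ N, RCLike.re (t.toFun (u n - u m) (u n - u m)) < ε) →
    ∃ hg : g ∈ D,
      Tendsto (fun n => RCLike.re (t.toFun (u n - ⟨g, hg⟩) (u n - ⟨g, hg⟩))) atTop (𝓝 0)

/-- The form `t` is closable. -/
def FormClosable {D : Submodule 𝕜 H} (t : NonnegForm 𝕜 D) : Prop :=
  ∀ u : ℕ → D, Tendsto (fun n => (u n : H)) atTop (𝓝 (0 : H)) →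
    (∀ ε > (0 : ℝ), ∃ N, ∀ n ≥ N, ∀ m ≥ N, RCLike.re (t.toFun (u n - u m) (u n - u m)) < ε) →
    Tendsto (fun n => RCLike.re (t.toFun (u n) (u n))) atTop (𝓝 0)

/-- The partial operator `S` represents the form `t`:
`⟪S g, h⟫ = t (g, h)` for all `g ∈ D ∩ dom S` and `h ∈ D`. -/
def Represents {D : Submodule 𝕜 H} (t : NonnegForm 𝕜 D) (S : H →ₗ.[𝕜] H) : Prop :=
  ∀ (g : H) (hgD : g ∈ D) (hgS : g ∈ S.domain) (h : D),
    @inner 𝕜 H _ (S ⟨g, hgS⟩) (h : H) = t.toFun ⟨g, hgD⟩ h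

/-! ### Auxiliary development: the energy space of a closed form -/

namespace ClosedFormAux

variable {𝕜 H : Type*} [RCLike 𝕜] [NormedAddCommGroup H] [InnerProductSpace 𝕜 H]
variable {D : Submodule 𝕜 H}

lemma form_add_right (t : NonnegForm 𝕜 D) (x y z : D) :
    t.toFun x (y + z) = t.toFun x y + t.toFun x z := by
  rw [t.conj_symm x (y + z), t.add_left, map_add, ← t.conj_symm, ← t.conj_symm]

lemma form_smul_right (t : NonnegForm 𝕜 D) (c : 𝕜) (x y : D) :
    t.toFun x (c • y) = (starRingEnd 𝕜) c * t.toFun x y := by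
  rw [t.conj_symm x (c • y), t.smul_left, map_mul, ← t.conj_symm]

lemma form_zero_left (t : NonnegForm 𝕜 D) (h : D) : t.toFun 0 h = 0 := by
  have := t.smul_left 0 h h
  simpa using this

lemma form_zero_right (t : NonnegForm 𝕜 D) (h : D) : t.toFun h 0 = 0 := by
  rw [t.conj_symm, form_zero_left, map_zero]

/-- Type synonym for `D` carrying the energy norm of the form `t`. -/
@[nolint unusedArguments]
def ESpace (_t : NonnegForm 𝕜 D) : Type _ := D

instance {t : NonnegForm 𝕜 D} : AddCommGroup (ESpace t) :=
  inferInstanceAs (AddCommGroup D)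

instance {t : NonnegForm 𝕜 D} : Module 𝕜 (ESpace t) :=
  inferInstanceAs (Module 𝕜 D)

/-- The identity map `D → ESpace t`. -/
def toE (t : NonnegForm 𝕜 D) (x : D) : ESpace t := x

/-- The identity map `ESpace t → D`. -/
def ofE {t : NonnegForm 𝕜 D} (x : ESpace t) : D := x

@[simp] lemma ofE_toE {t : NonnegForm 𝕜 D} (x : D) : ofE (toE t x) = x := rfl
@[simp] lemma toE_ofE {t : NonnegForm 𝕜 D} (x : ESpace t) : toE t (ofE x) = x := rfl
@[simp] lemma ofE_add {t : NonnegForm 𝕜 D} (x y : ESpace t) :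
    ofE (x + y) = ofE x + ofE y := rfl
@[simp] lemma ofE_sub {t : NonnegForm 𝕜 D} (x y : ESpace t) :
    ofE (x - y) = ofE x - ofE y := rfl
@[simp] lemma ofE_smul {t : NonnegForm 𝕜 D} (c : 𝕜) (x : ESpace t) :
    ofE (c • x) = c • ofE x := rfl

/-- The energy inner product on `ESpace t`. -/
def eCore (t : NonnegForm 𝕜 D) : InnerProductSpace.Core 𝕜 (ESpace t) where
  inner x y := t.toFun (ofE y) (ofE x) + @inner 𝕜 H _ ((ofE x : D) : H) ((ofE y : D) : H)
  conj_inner_symm x y := by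
    simp only [map_add, ← t.conj_symm, inner_conj_symm]
  re_inner_nonneg x := by
    show (0:ℝ) ≤ re (t.toFun (ofE x) (ofE x) + @inner 𝕜 H _ ((ofE x : D) : H) ((ofE x : D) : H))
    rw [map_add]
    have h1 := t.nonneg (ofE x)
    have h2 : (0:ℝ) ≤ re (@inner 𝕜 H _ ((ofE x : D) : H) ((ofE x : D) : H)) :=
      inner_self_nonneg
    linarith
  add_left x y z := by
    simp only [ofE_add, form_add_right, inner_add_left, Submodule.coe_add]
    ring
  smul_left x y r := by
    simp only [ofE_smul, form_smul_right, inner_smul_left, Submodule.coe_smul]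
    ring
  definite x hx := by
    have hx' : t.toFun (ofE x) (ofE x)
        + @inner 𝕜 H _ ((ofE x : D) : H) ((ofE x : D) : H) = 0 := hx
    have hre := congrArg re hx'
    rw [map_add, map_zero] at hre
    have h1 := t.nonneg (ofE x)
    have h2 : re (@inner 𝕜 H _ ((ofE x : D) : H) ((ofE x : D) : H))
        = ‖((ofE x : D) : H)‖ ^ 2 := by
      rw [@inner_self_eq_norm_sq 𝕜]
    have h3 : (0:ℝ) ≤ ‖((ofE x : D) : H)‖ ^ 2 := by positivity
    have h4 : ‖((ofE x : D) : H)‖ ^ 2 = 0 := by linarith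
    have h5 : ((ofE x : D) : H) = 0 := by
      have := pow_eq_zero_iff (n := 2) (by norm_num) |>.mp h4
      exact norm_eq_zero.mp this
    have : (ofE x : D) = 0 := Subtype.ext h5
    exact this

noncomputable instance {t : NonnegForm 𝕜 D} : NormedAddCommGroup (ESpace t) :=
  @InnerProductSpace.Core.toNormedAddCommGroup 𝕜 (ESpace t) _ _ _ (eCore t)

noncomputable instance {t : NonnegForm 𝕜 D} : InnerProductSpace 𝕜 (ESpace t) :=
  InnerProductSpace.ofCore (eCore t).toCore

lemma inner_espace {t : NonnegForm 𝕜 D} (x y : ESpace t) :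
    (inner 𝕜 x y : 𝕜) = t.toFun (ofE y) (ofE x) + @inner 𝕜 H _ ((ofE x : D) : H) ((ofE y : D) : H) :=
  rfl

lemma norm_toE_sq (t : NonnegForm 𝕜 D) (x : D) :
    ‖toE t x‖ ^ 2 = re (t.toFun x x) + ‖(x : H)‖ ^ 2 := by
  have h := @norm_sq_eq_re_inner 𝕜 (ESpace t) _ _ _ (toE t x)
  rw [h, inner_espace, map_add, ofE_toE, @inner_self_eq_norm_sq 𝕜]

lemma re_form_le_norm_toE_sq (t : NonnegForm 𝕜 D) (x : D) :
    re (t.toFun x x) ≤ ‖toE t x‖ ^ 2 := by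
  have := norm_toE_sq t x
  nlinarith [norm_nonneg ((x : H))]

lemma norm_coe_le_norm_toE (t : NonnegForm 𝕜 D) (x : D) :
    ‖(x : H)‖ ≤ ‖toE t x‖ := by
  have h := norm_toE_sq t x
  nlinarith [t.nonneg x, norm_nonneg ((x : H)), norm_nonneg (toE t x)]

section WithComplete

variable [CompleteSpace H]

lemma espace_complete (t : NonnegForm 𝕜 D) (hclosed : FormClosed t) :
    CompleteSpace (ESpace t) := by
  apply Metric.complete_of_cauchySeq_tendsto
  intro u hu
  have hcau : ∀ ε > (0:ℝ), ∃ N, ∀ n ≥ N, ∀ m ≥ N, ‖u n - u m‖ < ε := by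
    intro ε hε
    obtain ⟨N, hN⟩ := Metric.cauchySeq_iff.mp hu ε hε
    exact ⟨N, fun n hn m hm => by
      have := hN n hn m hm; rwa [dist_eq_norm] at this⟩
  have hH : CauchySeq (fun n => ((ofE (u n) : D) : H)) := by
    rw [Metric.cauchySeq_iff]
    intro ε hε
    obtain ⟨N, hN⟩ := hcau ε hε
    refine ⟨N, fun n hn m hm => ?_⟩
    have h1 : ((ofE (u n) : D) : H) - ((ofE (u m) : D) : H) = ((ofE (u n - u m) : D) : H) := by
      simp
    calc dist ((ofE (u n) : D) : H) ((ofE (u m) : D) : H)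
        = ‖((ofE (u n - u m) : D) : H)‖ := by rw [dist_eq_norm, h1]
      _ ≤ ‖toE t (ofE (u n - u m))‖ := norm_coe_le_norm_toE t _
      _ = ‖u n - u m‖ := by rw [toE_ofE]
      _ < ε := hN n hn m hm
  obtain ⟨g, hg⟩ := cauchySeq_tendsto_of_complete hH
  have hform : ∀ ε > (0:ℝ), ∃ N, ∀ n ≥ N, ∀ m ≥ N,
      re (t.toFun (ofE (u n) - ofE (u m)) (ofE (u n) - ofE (u m))) < ε := by
    intro ε hε
    obtain ⟨N, hN⟩ := hcau (Real.sqrt ε) (Real.sqrt_pos.mpr hε)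
    refine ⟨N, fun n hn m hm => ?_⟩
    have h2 : re (t.toFun (ofE (u n) - ofE (u m)) (ofE (u n) - ofE (u m)))
        ≤ ‖toE t (ofE (u n) - ofE (u m))‖ ^ 2 := re_form_le_norm_toE_sq t _
    have h3 : toE t (ofE (u n) - ofE (u m)) = u n - u m := rfl
    rw [h3] at h2
    have h4 : ‖u n - u m‖ < Real.sqrt ε := hN n hn m hm
    have h5 : ‖u n - u m‖ ^ 2 < ε := by
      nlinarith [Real.sq_sqrt hε.le, norm_nonneg (u n - u m), Real.sqrt_nonneg ε]
    linarith
  obtain ⟨hgD, htend⟩ := hclosed (fun n => ofE (u n)) g hg hform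
  refine ⟨toE t ⟨g, hgD⟩, ?_⟩
  have key : Tendsto (fun n => ‖u n - toE t ⟨g, hgD⟩‖ ^ 2) atTop (𝓝 0) := by
    have heq : ∀ n, ‖u n - toE t ⟨g, hgD⟩‖ ^ 2
        = re (t.toFun (ofE (u n) - ⟨g, hgD⟩) (ofE (u n) - ⟨g, hgD⟩))
          + ‖((ofE (u n) : D) : H) - g‖ ^ 2 := by
      intro n
      have h3 : u n - toE t ⟨g, hgD⟩ = toE t (ofE (u n) - ⟨g, hgD⟩) := rfl
      rw [h3, norm_toE_sq]
      have h4 : ((ofE (u n) - ⟨g, hgD⟩ : D) : H) = ((ofE (u n) : D) : H) - g := by simp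
      rw [h4]
    simp only [heq]
    have h2 : Tendsto (fun n => ‖((ofE (u n) : D) : H) - g‖ ^ 2) atTop (𝓝 0) := by
      have h6 := tendsto_iff_norm_sub_tendsto_zero.mp hg
      have h7 := h6.pow 2
      simpa using h7
    simpa using htend.add h2
  have hnorm : Tendsto (fun n => ‖u n - toE t ⟨g, hgD⟩‖) atTop (𝓝 0) := by
    have hs := key.sqrt
    rw [Real.sqrt_zero] at hs
    convert hs using 2 with n
    rw [Real.sqrt_sq (norm_nonneg _)]
  exact tendsto_iff_norm_sub_tendsto_zero.mpr hnorm

/-- The functional `g ↦ t(g, h)` as a continuous linear map on the energy space. -/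
noncomputable def formFunctional (t : NonnegForm 𝕜 D) (h : D) : ESpace t →L[𝕜] 𝕜 :=
  LinearMap.mkContinuous
    { toFun := fun g => t.toFun (ofE g) h
      map_add' := fun a b => t.add_left (ofE a) (ofE b) h
      map_smul' := fun c a => t.smul_left c (ofE a) h }
    (2 * ‖toE t h‖)
    (fun g => by
      have h1 : t.toFun (ofE g) h
          = (inner 𝕜 (toE t h) g : 𝕜) - @inner 𝕜 H _ ((h : H)) ((ofE g : D) : H) := by
        rw [inner_espace]; simp
      show ‖t.toFun (ofE g) h‖ ≤ 2 * ‖toE t h‖ * ‖g‖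
      rw [h1]
      calc ‖(inner 𝕜 (toE t h) g : 𝕜) - @inner 𝕜 H _ ((h : H)) ((ofE g : D) : H)‖
          ≤ ‖(inner 𝕜 (toE t h) g : 𝕜)‖ + ‖@inner 𝕜 H _ ((h : H)) ((ofE g : D) : H)‖ :=
            norm_sub_le _ _
        _ ≤ ‖toE t h‖ * ‖g‖ + ‖(h : H)‖ * ‖((ofE g : D) : H)‖ :=
            add_le_add (norm_inner_le_norm _ _) (norm_inner_le_norm _ _)
        _ ≤ ‖toE t h‖ * ‖g‖ + ‖toE t h‖ * ‖g‖ := by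
            have h2 : ‖(h : H)‖ ≤ ‖toE t h‖ := norm_coe_le_norm_toE t h
            have h3 : ‖((ofE g : D) : H)‖ ≤ ‖g‖ := norm_coe_le_norm_toE t (ofE g)
            have := mul_le_mul h2 h3 (norm_nonneg _) (norm_nonneg _)
            linarith
        _ = 2 * ‖toE t h‖ * ‖g‖ := by ring)

lemma formFunctional_apply (t : NonnegForm 𝕜 D) (h : D) (g : ESpace t) :
    formFunctional t h g = t.toFun (ofE g) h := rfl

end WithComplete

end ClosedFormAux


/-- For a closed densely defined nonnegative form `t`: `D = D₊` iff `t` is bounded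
(i.e. `D = H` and `|t(g,h)| ≤ M‖g‖‖h‖` for some `M ≥ 0`). -/
theorem closed_form_Dplus_eq_iff_bounded {D : Submodule 𝕜 H} (hD : Dense (D : Set H))
    (t : NonnegForm 𝕜 D) (hclosed : FormClosed t) :
    (∀ g : H, g ∈ D → g ∈ Dplus t) ↔
      (D = ⊤ ∧ ∃ M : ℝ, 0 ≤ M ∧ ∀ g h : D, ‖t.toFun g h‖ ≤ M * ‖(g : H)‖ * ‖(h : H)‖) := by
    classical
  open ClosedFormAux in
  constructor
  · intro hyp
    haveI := espace_complete t hclosed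
    -- Banach–Steinhaus for the family of functionals indexed by the unit ball of D
    have hpt : ∀ x : ESpace t, ∃ C : ℝ,
        ∀ i : {h : D // ‖(h : H)‖ ≤ 1}, ‖formFunctional t i.1 x‖ ≤ C := by
      intro x
      obtain ⟨hg, C, hC0, hC⟩ := hyp ((ofE x : D) : H) (ofE x).2
      refine ⟨Real.sqrt C, fun i => ?_⟩
      have hx : (⟨((ofE x : D) : H), hg⟩ : D) = ofE x := Subtype.ext rfl
      have h2 := hC i.1
      rw [hx] at h2
      apply Real.le_sqrt_of_sq_le
      rw [formFunctional_apply]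
      have h4 : ‖((i.1 : D) : H)‖ ^ 2 ≤ 1 := by
        have := i.2
        nlinarith [norm_nonneg ((i.1 : D) : H)]
      nlinarith [norm_nonneg ((i.1 : D) : H), sq_nonneg ‖t.toFun (ofE x) i.1‖]
    obtain ⟨C', hC'⟩ := banach_steinhaus hpt
    set M₀ := max C' 0 with hM₀def
    have hM₀ : (0:ℝ) ≤ M₀ := le_max_right _ _
    have hC'M₀ : ∀ i : {h : D // ‖(h : H)‖ ≤ 1}, ‖formFunctional t i.1‖ ≤ M₀ :=
      fun i => (hC' i).trans (le_max_left _ _)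
    -- the key uniform bound
    have key : ∀ x h : D, ‖t.toFun x h‖ ≤ M₀ * ‖toE t x‖ * ‖(h : H)‖ := by
      intro x h
      by_cases hh : (h : H) = 0
      · have h0 : h = 0 := Subtype.ext hh
        rw [h0, form_zero_right]
        simp
      · have hpos : 0 < ‖(h : H)‖ := norm_pos_iff.mpr hh
        set c : 𝕜 := (‖(h : H)‖ : 𝕜)⁻¹ with hc
        have hnc : ‖c‖ = ‖(h : H)‖⁻¹ := by
          rw [hc, norm_inv, RCLike.norm_ofReal, abs_of_nonneg (norm_nonneg _)]
        have hch : ‖((c • h : D) : H)‖ = 1 := by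
          rw [Submodule.coe_smul, norm_smul, hnc, inv_mul_cancel₀ hpos.ne']
        have hi := hC'M₀ ⟨c • h, le_of_eq hch⟩
        have h5 : ‖t.toFun x (c • h)‖ ≤ M₀ * ‖toE t x‖ := by
          calc ‖t.toFun x (c • h)‖
              = ‖formFunctional t (c • h) (toE t x)‖ := rfl
            _ ≤ ‖formFunctional t (c • h)‖ * ‖toE t x‖ :=
                ContinuousLinearMap.le_opNorm _ _
            _ ≤ M₀ * ‖toE t x‖ :=
                mul_le_mul_of_nonneg_right hi (norm_nonneg _)
        have h6 : ‖t.toFun x (c • h)‖ = ‖(h : H)‖⁻¹ * ‖t.toFun x h‖ := by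
          rw [form_smul_right, norm_mul, RCLike.norm_conj, hnc]
        rw [h6] at h5
        have h7 := mul_le_mul_of_nonneg_left h5 (le_of_lt hpos)
        rw [← mul_assoc, mul_inv_cancel₀ hpos.ne', one_mul] at h7
        calc ‖t.toFun x h‖ ≤ ‖(h : H)‖ * (M₀ * ‖toE t x‖) := h7
          _ = M₀ * ‖toE t x‖ * ‖(h : H)‖ := by ring
    -- comparison of the energy norm with the original norm
    have normbd : ∀ x : D, ‖toE t x‖ ≤ (M₀ + 1) * ‖(x : H)‖ := by
      intro x
      have h1 := norm_toE_sq t x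
      have h2 : re (t.toFun x x) ≤ ‖t.toFun x x‖ := RCLike.re_le_norm _
      have h3 := key x x
      have h4 := norm_coe_le_norm_toE t x
      rcases eq_or_lt_of_le (norm_nonneg (toE t x)) with ha | ha
      · rw [← ha]
        positivity
      · have h5 : re (t.toFun x x) ≤ M₀ * ‖toE t x‖ * ‖(x : H)‖ := h2.trans h3
        have h6 : ‖toE t x‖ * ‖toE t x‖ ≤ ((M₀ + 1) * ‖(x : H)‖) * ‖toE t x‖ := by
          nlinarith [mul_le_mul_of_nonneg_left h4 (norm_nonneg ((x : H)))]
        exact le_of_mul_le_mul_right h6 ha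
    -- the final bound
    have hbound : ∀ g h : D, ‖t.toFun g h‖ ≤ (M₀ * (M₀ + 1)) * ‖(g : H)‖ * ‖(h : H)‖ := by
      intro g h
      calc ‖t.toFun g h‖ ≤ M₀ * ‖toE t g‖ * ‖(h : H)‖ := key g h
        _ ≤ M₀ * ((M₀ + 1) * ‖(g : H)‖) * ‖(h : H)‖ := by
            have := normbd g
            have h8 : M₀ * ‖toE t g‖ ≤ M₀ * ((M₀ + 1) * ‖(g : H)‖) :=
              mul_le_mul_of_nonneg_left this hM₀
            exact mul_le_mul_of_nonneg_right h8 (norm_nonneg _)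
        _ = (M₀ * (M₀ + 1)) * ‖(g : H)‖ * ‖(h : H)‖ := by ring
    -- D is closed, hence D = ⊤
    have hclosedSet : IsClosed (D : Set H) := by
      apply IsSeqClosed.isClosed
      intro u p hu hup
      have hcs : CauchySeq u := hup.cauchySeq
      set v : ℕ → D := fun n => ⟨u n, hu n⟩ with hv
      have hvt : Tendsto (fun n => ((v n : H))) atTop (𝓝 p) := hup
      set M' := M₀ * (M₀ + 1) with hM'def
      have hM' : (0:ℝ) ≤ M' := by positivity
      have hcau : ∀ ε > (0:ℝ), ∃ N, ∀ n ≥ N, ∀ m ≥ N,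
          re (t.toFun (v n - v m) (v n - v m)) < ε := by
        intro ε hε
        have hε' : 0 < ε / (M' + 1) := by positivity
        obtain ⟨N, hN⟩ := Metric.cauchySeq_iff.mp hcs
          (Real.sqrt (ε / (M' + 1))) (Real.sqrt_pos.mpr hε')
        refine ⟨N, fun n hn m hm => ?_⟩
        have hd := hN n hn m hm
        rw [dist_eq_norm] at hd
        have h8 : ‖u n - u m‖ ^ 2 < ε / (M' + 1) := by
          nlinarith [Real.sq_sqrt hε'.le, norm_nonneg (u n - u m),
            Real.sqrt_nonneg (ε / (M' + 1))]
        have h9 : re (t.toFun (v n - v m) (v n - v m))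
            ≤ ‖t.toFun (v n - v m) (v n - v m)‖ := RCLike.re_le_norm _
        have h10 := hbound (v n - v m) (v n - v m)
        have h11 : ((v n - v m : D) : H) = u n - u m := by simp [hv]
        rw [h11] at h10
        have h13 : M' * (ε / (M' + 1)) + (ε / (M' + 1)) = ε := by
          field_simp
        nlinarith [mul_le_mul_of_nonneg_left h8.le hM',
          norm_nonneg (u n - u m)]
      obtain ⟨hp, -⟩ := hclosed v p hvt hcau
      exact hp
    have hDtop : D = ⊤ := by
      rw [Submodule.eq_top_iff']
      intro x
      have h1 : closure (D : Set H) = Set.univ := hD.closure_eq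
      have h2 : closure (D : Set H) = (D : Set H) := hclosedSet.closure_eq
      have : x ∈ (D : Set H) := by rw [← h2, h1]; trivial
      exact this
    exact ⟨hDtop, M₀ * (M₀ + 1), by positivity, hbound⟩
  · rintro ⟨-, M, hM, hb⟩ g hg
    refine ⟨hg, (M * ‖g‖) ^ 2, by positivity, fun h => ?_⟩
    have h1 := hb ⟨g, hg⟩ h
    have h2 : ‖((⟨g, hg⟩ : D) : H)‖ = ‖g‖ := rfl
    rw [h2] at h1
    calc ‖t.toFun ⟨g, hg⟩ h‖ ^ 2 ≤ (M * ‖g‖ * ‖(h : H)‖) ^ 2 :=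
          pow_le_pow_left₀ (norm_nonneg _) h1 2
      _ = (M * ‖g‖) ^ 2 * ‖(h : H)‖ ^ 2 := by ring
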